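/- Let m < M be real numbers, let Φ_1,…,Φ_n be positive linear maps on B(H) with Σ_{i=1}^n Φ_i(I) = I, let B_1,…,B_n be self-adjoint operators with m·I ≤ B_i ≤ M·I, and let f : [m, M] → ℝ be a continuous convex function. Then f((m+M)·I − Σ_i Φ_i(B_i)) ≤ (f(m) + f(M))·I − Σ_i Φ_i(f(B_i)) − δ_f · B̃ ≤ (f(m) + f(M))·I − Σ_i Φ_i(f(B_i)), where B̃ = I − (1/(M−m))·[ Σ_i Φ_i(|B_i − ((m+M)/2)·I|) + |Σ_i Φ_i(B_i) − ((m+M)/2)·I| ]. -/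

import Mathlib

set_option synthInstance.maxHeartbeats 1000000
set_option maxHeartbeats 1000000

/-- The absolute value of a (self-adjoint) bounded operator, via the
continuous functional calculus. -/
noncomputable def opAbs {H : Type*} [NormedAddCommGroup H] [InnerProductSpace ℂ H]
    [CompleteSpace H] (A : H →L[ℂ] H) : H →L[ℂ] H :=
  cfc (fun t : ℝ => |t|) A

section Aux

variable {H : Type*} [NormedAddCommGroup H] [InnerProductSpace ℂ H] [CompleteSpace H]

lemma aux_smul_sa (r : ℝ) {y : H →L[ℂ] H} (hy : IsSelfAdjoint y) :
    IsSelfAdjoint (r • y) := by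
  rw [IsSelfAdjoint, star_smul, star_trivial, hy.star_eq]

lemma aux_spec_subset_Icc {a : H →L[ℂ] H} (ha : IsSelfAdjoint a) {m M : ℝ}
    (h1 : m • 1 ≤ a) (h2 : a ≤ M • 1) : spectrum ℝ a ⊆ Set.Icc m M := by
  intro x hx
  constructor
  · exact (algebraMap_le_iff_le_spectrum (R := ℝ) ha).mp
      (by rwa [Algebra.algebraMap_eq_smul_one]) x hx
  · exact (le_algebraMap_iff_spectrum_le (R := ℝ) ha).mp
      (by rwa [Algebra.algebraMap_eq_smul_one]) x hx

lemma aux_opAbs_eq {a : H →L[ℂ] H} (ha : IsSelfAdjoint a) (c : ℝ) :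
    opAbs (a - c • 1) = cfc (fun t : ℝ => |t - c|) a := by
  have h1 : a - c • 1 = cfc (fun t : ℝ => t - c) a := by
    rw [cfc_sub (fun t : ℝ => t) (fun _ : ℝ => c) a (by fun_prop) (by fun_prop),
      cfc_id' ℝ a, cfc_const c a, Algebra.algebraMap_eq_smul_one]
  rw [opAbs, h1, ← cfc_comp' (fun t : ℝ => |t|) (fun t : ℝ => t - c) a
    (continuous_abs.continuousOn) (by fun_prop)]

lemma aux_cfc_affine_abs {a : H →L[ℂ] H} (ha : IsSelfAdjoint a) (α γ ε c : ℝ) :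
    cfc (fun t : ℝ => α * t + γ + ε * |t - c|) a
      = α • a + γ • 1 + ε • cfc (fun t : ℝ => |t - c|) a := by
  have habs : ContinuousOn (fun t : ℝ => |t - c|) (spectrum ℝ a) :=
    (continuous_abs.comp (continuous_id.sub continuous_const)).continuousOn
  rw [cfc_add a (fun t : ℝ => α * t + γ) (fun t : ℝ => ε * |t - c|) (by fun_prop)
      (habs.const_smul ε),
    cfc_add a (fun t : ℝ => α * t) (fun t : ℝ => γ) (by fun_prop) (by fun_prop),
    cfc_const_mul α (fun t : ℝ => t) a (by fun_prop),
    cfc_const_mul ε (fun t : ℝ => |t - c|) a habs,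
    cfc_id' ℝ a, cfc_const γ a, Algebra.algebraMap_eq_smul_one]

lemma aux_cfc_abs_le {a : H →L[ℂ] H} (ha : IsSelfAdjoint a) {m M : ℝ} (hmM : m < M)
    (hspec : spectrum ℝ a ⊆ Set.Icc m M) :
    cfc (fun t : ℝ => |t - (m + M) / 2|) a ≤ ((M - m) / 2) • 1 := by
  rw [← Algebra.algebraMap_eq_smul_one]
  refine cfc_le_algebraMap _ _ _ (fun x hx => ?_)
    ((continuous_abs.comp (continuous_id.sub continuous_const)).continuousOn) ha
  obtain ⟨h1, h2⟩ := hspec hx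
  rw [abs_le]
  constructor <;> [linarith; linarith]

lemma scalar_key (m M : ℝ) (hmM : m < M) (f : ℝ → ℝ)
    (hconv : ConvexOn ℝ (Set.Icc m M) f) :
    ∀ t ∈ Set.Icc m M,
      f t ≤ ((f M - f m) / (M - m)) * t +
          ((M * f m - m * f M) / (M - m) - (f m + f M - 2 * f ((m + M) / 2)) / 2) +
          ((f m + f M - 2 * f ((m + M) / 2)) * (M - m)⁻¹) * |t - (m + M) / 2| := by
  intro t ht
  obtain ⟨htm, htM⟩ := ht
  have hMm : (0:ℝ) < M - m := by linarith
  have hc : (m + M) / 2 ∈ Set.Icc m M := by constructor <;> [linarith; linarith]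
  rcases le_total t ((m + M)/2) with hcase | hcase
  · have habs : |t - (m + M)/2| = (m + M)/2 - t := by
      rw [abs_of_nonpos (by linarith)]; ring
    set a : ℝ := ((m + M)/2 - t) / ((M - m)/2) with ha_def
    set b : ℝ := (t - m) / ((M - m)/2) with hb_def
    have ha : 0 ≤ a := div_nonneg (by linarith) (by linarith)
    have hb : 0 ≤ b := div_nonneg (by linarith) (by linarith)
    have hab : a + b = 1 := by rw [ha_def, hb_def]; field_simp; ring
    have hcomb : a • m + b • ((m + M)/2) = t := by
      rw [ha_def, hb_def, smul_eq_mul, smul_eq_mul]; field_simp; ring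
    have h1 := hconv.2 (Set.left_mem_Icc.mpr hmM.le) hc ha hb hab
    rw [hcomb] at h1
    calc f t ≤ a • f m + b • f ((m + M)/2) := h1
      _ = _ := by
        rw [habs, smul_eq_mul, smul_eq_mul, ha_def, hb_def]
        field_simp
        ring
  · have habs : |t - (m + M)/2| = t - (m + M)/2 := abs_of_nonneg (by linarith)
    set a : ℝ := (M - t) / ((M - m)/2) with ha_def
    set b : ℝ := (t - (m + M)/2) / ((M - m)/2) with hb_def
    have ha : 0 ≤ a := div_nonneg (by linarith) (by linarith)
    have hb : 0 ≤ b := div_nonneg (by linarith) (by linarith)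
    have hab : a + b = 1 := by rw [ha_def, hb_def]; field_simp; ring
    have hcomb : a • ((m + M)/2) + b • M = t := by
      rw [ha_def, hb_def, smul_eq_mul, smul_eq_mul]; field_simp; ring
    have h1 := hconv.2 hc (Set.right_mem_Icc.mpr hmM.le) ha hb hab
    rw [hcomb] at h1
    calc f t ≤ a • f ((m + M)/2) + b • f M := h1
      _ = _ := by
        rw [habs, smul_eq_mul, smul_eq_mul, ha_def, hb_def]
        field_simp
        ring

end Aux

/-- refined Jensen–Mercer operator inequality, Corollary 3.1. -/
theorem jensen_mercer_refined {H : Type*} [NormedAddCommGroup H] [InnerProductSpace ℂ H]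
    [CompleteSpace H] {n : ℕ} (m M : ℝ) (hmM : m < M)
    (Φ : Fin n → (H →L[ℂ] H) →ₗ[ℂ] (H →L[ℂ] H))
    (hΦpos : ∀ i, ∀ T : H →L[ℂ] H, 0 ≤ T → 0 ≤ Φ i T)
    (hΦ1 : ∑ i, Φ i 1 = (1 : H →L[ℂ] H))
    (B : Fin n → H →L[ℂ] H) (hBsa : ∀ i, IsSelfAdjoint (B i))
    (hBl : ∀ i, m • 1 ≤ B i) (hBu : ∀ i, B i ≤ M • 1)
    (f : ℝ → ℝ) (hf : ContinuousOn f (Set.Icc m M)) (hconv : ConvexOn ℝ (Set.Icc m M) f) :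
    cfc f ((m + M) • (1 : H →L[ℂ] H) - ∑ i, Φ i (B i)) ≤
        (f m + f M) • (1 : H →L[ℂ] H) - ∑ i, Φ i (cfc f (B i)) -
          (f m + f M - 2 * f ((m + M) / 2)) •
            ((1 : H →L[ℂ] H) -
              (M - m)⁻¹ •
                (∑ i, Φ i (opAbs (B i - ((m + M) / 2) • 1)) +
                  opAbs (∑ i, Φ i (B i) - ((m + M) / 2) • 1))) ∧
      (f m + f M) • (1 : H →L[ℂ] H) - ∑ i, Φ i (cfc f (B i)) -
          (f m + f M - 2 * f ((m + M) / 2)) •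
            ((1 : H →L[ℂ] H) -
              (M - m)⁻¹ •
                (∑ i, Φ i (opAbs (B i - ((m + M) / 2) • 1)) +
                  opAbs (∑ i, Φ i (B i) - ((m + M) / 2) • 1))) ≤
        (f m + f M) • (1 : H →L[ℂ] H) - ∑ i, Φ i (cfc f (B i)) := by
  have hMm : (0:ℝ) < M - m := by linarith
  -- basic properties of the maps Φ
  have hΦ_smul : ∀ i (r : ℝ) (x : H →L[ℂ] H), Φ i (r • x) = r • Φ i x := fun i r x =>
    LinearMap.map_smul_of_tower (Φ i) r x
  have hmono : ∀ i, ∀ {x y : H →L[ℂ] H}, x ≤ y → Φ i x ≤ Φ i y := by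
    intro i x y hxy
    have h := hΦpos i (y - x) (sub_nonneg.2 hxy)
    rw [map_sub] at h
    exact sub_nonneg.1 h
  -- selfadjointness of Φ i (B i) and of the sum A
  have hΦBsa : ∀ i, IsSelfAdjoint (Φ i (B i)) := by
    intro i
    have h1 : Φ i (B i) = Φ i (B i - m • 1) + m • Φ i 1 := by
      rw [map_sub, hΦ_smul]; abel
    rw [h1]
    exact ((hΦpos i _ (sub_nonneg.2 (hBl i))).isSelfAdjoint).add
      (aux_smul_sa m ((hΦpos i 1 zero_le_one).isSelfAdjoint))
  have hAsa : IsSelfAdjoint (∑ i, Φ i (B i)) := by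
    rw [IsSelfAdjoint, star_sum]
    exact Finset.sum_congr rfl fun i _ => (hΦBsa i)
  -- bounds on A := ∑ Φ i (B i)
  have hsum_smul_one : ∀ r : ℝ, ∑ i, Φ i (r • 1) = r • (1 : H →L[ℂ] H) := by
    intro r
    simp only [hΦ_smul]
    rw [← Finset.smul_sum, hΦ1]
  have hAl : m • (1 : H →L[ℂ] H) ≤ ∑ i, Φ i (B i) := by
    rw [← hsum_smul_one m]
    exact Finset.sum_le_sum fun i _ => hmono i (hBl i)
  have hAu : (∑ i, Φ i (B i)) ≤ M • (1 : H →L[ℂ] H) := by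
    rw [← hsum_smul_one M]
    exact Finset.sum_le_sum fun i _ => hmono i (hBu i)
  set A : H →L[ℂ] H := ∑ i, Φ i (B i) with hA_def
  set c : ℝ := (m + M) / 2 with hc_def
  set δ : ℝ := f m + f M - 2 * f c with hδ_def
  set α : ℝ := (f M - f m) / (M - m) with hα_def
  set γ : ℝ := (M * f m - m * f M) / (M - m) - δ / 2 with hγ_def
  set ε : ℝ := δ * (M - m)⁻¹ with hε_def
  have hA'sa : IsSelfAdjoint ((m + M) • (1 : H →L[ℂ] H) - A) :=
    (aux_smul_sa (m + M) (IsSelfAdjoint.one (H →L[ℂ] H))).sub hAsa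
  have hA'l : m • (1 : H →L[ℂ] H) ≤ (m + M) • (1 : H →L[ℂ] H) - A := by
    have h := sub_le_sub_left hAu ((m + M) • (1 : H →L[ℂ] H))
    rw [← sub_smul, show m + M - M = m by ring] at h
    exact h
  have hA'u : (m + M) • (1 : H →L[ℂ] H) - A ≤ M • (1 : H →L[ℂ] H) := by
    have h := sub_le_sub_left hAl ((m + M) • (1 : H →L[ℂ] H))
    rw [← sub_smul, show m + M - m = M by ring] at h
    exact h
  -- spectra
  have hspecB : ∀ i, spectrum ℝ (B i) ⊆ Set.Icc m M := fun i =>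
    aux_spec_subset_Icc (hBsa i) (hBl i) (hBu i)
  have hspecA : spectrum ℝ A ⊆ Set.Icc m M := aux_spec_subset_Icc hAsa hAl hAu
  have hspecA' : spectrum ℝ ((m + M) • (1 : H →L[ℂ] H) - A) ⊆ Set.Icc m M :=
    aux_spec_subset_Icc hA'sa hA'l hA'u
  -- the core cfc estimate
  have hstep : ∀ (a : H →L[ℂ] H), IsSelfAdjoint a → spectrum ℝ a ⊆ Set.Icc m M →
      cfc f a ≤ α • a + γ • 1 + ε • opAbs (a - c • 1) := by
    intro a hsa hspec
    have hcont : ContinuousOn (fun t : ℝ => α * t + γ + ε * |t - c|) (spectrum ℝ a) :=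
      ((continuous_const.mul continuous_id).add continuous_const).continuousOn.add
        (((continuous_abs.comp (continuous_id.sub continuous_const)).const_smul ε).continuousOn)
    have h := cfc_mono (f := f) (g := fun t : ℝ => α * t + γ + ε * |t - c|) (a := a)
      (fun x hx => by
        have := scalar_key m M hmM f hconv x (hspec hx)
        rw [hα_def, hγ_def, hε_def, hδ_def, hc_def]
        convert this using 2 <;> ring)
      (hf.mono hspec) hcont
    rwa [aux_cfc_affine_abs hsa α γ ε c, ← aux_opAbs_eq hsa c] at h
  -- step 1 : bound on ∑ Φ i (cfc f (B i))
  have step1 : ∑ i, Φ i (cfc f (B i)) ≤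
      α • A + γ • 1 + ε • ∑ i, Φ i (opAbs (B i - c • 1)) := by
    calc ∑ i, Φ i (cfc f (B i))
        ≤ ∑ i, Φ i (α • B i + γ • 1 + ε • opAbs (B i - c • 1)) :=
          Finset.sum_le_sum fun i _ => hmono i (hstep (B i) (hBsa i) (hspecB i))
      _ = α • A + γ • 1 + ε • ∑ i, Φ i (opAbs (B i - c • 1)) := by
          simp only [map_add, hΦ_smul]
          rw [Finset.sum_add_distrib, Finset.sum_add_distrib, ← Finset.smul_sum,
            ← Finset.smul_sum, ← Finset.smul_sum, hΦ1, hA_def]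
  -- step 2 : bound on cfc f ((m+M)•1 - A)
  have hDA' : opAbs (((m + M) • (1 : H →L[ℂ] H) - A) - c • 1) = opAbs (A - c • 1) := by
    rw [aux_opAbs_eq hA'sa c, aux_opAbs_eq hAsa c]
    have hA'eq : (m + M) • (1 : H →L[ℂ] H) - A = cfc (fun t : ℝ => (m + M) - t) A := by
      rw [cfc_sub (fun _ : ℝ => m + M) (fun t : ℝ => t) A (by fun_prop) (by fun_prop),
        cfc_id' ℝ A, cfc_const (m + M) A, Algebra.algebraMap_eq_smul_one]
    rw [hA'eq, ← cfc_comp' (fun t : ℝ => |t - c|) (fun t : ℝ => (m + M) - t) A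
      ((continuous_abs.comp (continuous_id.sub continuous_const)).continuousOn) (by fun_prop)]
    exact cfc_congr fun t _ => by
      rw [show m + M - t - c = -(t - c) by rw [hc_def]; ring, abs_neg]
  have step2 : cfc f ((m + M) • (1 : H →L[ℂ] H) - A) ≤
      α • ((m + M) • (1 : H →L[ℂ] H) - A) + γ • 1 + ε • opAbs (A - c • 1) := by
    have h := hstep ((m + M) • (1 : H →L[ℂ] H) - A) hA'sa hspecA'
    rwa [hDA'] at h
  -- nonnegativity facts for the second inequality
  have hδnn : 0 ≤ δ := by
    have h := hconv.2 (Set.left_mem_Icc.mpr hmM.le) (Set.right_mem_Icc.mpr hmM.le)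
      (by norm_num : (0:ℝ) ≤ 1/2) (by norm_num : (0:ℝ) ≤ 1/2) (by norm_num)
    rw [show (1/2 : ℝ) • m + (1/2 : ℝ) • M = c by rw [hc_def]; push_cast [smul_eq_mul]; ring] at h
    rw [hδ_def]
    simp only [smul_eq_mul] at h
    linarith
  have hSD : ∑ i, Φ i (opAbs (B i - c • 1)) ≤ ((M - m) / 2) • (1 : H →L[ℂ] H) := by
    calc ∑ i, Φ i (opAbs (B i - c • 1))
        ≤ ∑ i, Φ i (((M - m) / 2) • 1) := Finset.sum_le_sum fun i _ => hmono i (by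
          rw [aux_opAbs_eq (hBsa i) c, hc_def]
          exact aux_cfc_abs_le (hBsa i) hmM (hspecB i))
      _ = ((M - m) / 2) • 1 := hsum_smul_one _
  have hDAle : opAbs (A - c • 1) ≤ ((M - m) / 2) • (1 : H →L[ℂ] H) := by
    rw [aux_opAbs_eq hAsa c, hc_def]
    exact aux_cfc_abs_le hAsa hmM hspecA
  have hBt : (0 : H →L[ℂ] H) ≤ 1 - (M - m)⁻¹ •
      (∑ i, Φ i (opAbs (B i - c • 1)) + opAbs (A - c • 1)) := by
    rw [sub_nonneg]
    calc (M - m)⁻¹ • (∑ i, Φ i (opAbs (B i - c • 1)) + opAbs (A - c • 1))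
        ≤ (M - m)⁻¹ • ((M - m) • (1 : H →L[ℂ] H)) := by
          refine smul_le_smul_of_nonneg_left ?_ (inv_nonneg.2 hMm.le)
          calc ∑ i, Φ i (opAbs (B i - c • 1)) + opAbs (A - c • 1)
              ≤ ((M - m) / 2) • (1 : H →L[ℂ] H) + ((M - m) / 2) • 1 := add_le_add hSD hDAle
            _ = (M - m) • 1 := by rw [← add_smul]; norm_num
      _ = 1 := by rw [smul_smul, inv_mul_cancel₀ hMm.ne', one_smul]
  constructor
  · -- main refined inequality
    have hE : (0 : H →L[ℂ] H) ≤
        (α • A + γ • 1 + ε • ∑ i, Φ i (opAbs (B i - c • 1))) - ∑ i, Φ i (cfc f (B i)) :=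
      sub_nonneg.2 step1
    calc cfc f ((m + M) • (1 : H →L[ℂ] H) - A)
        ≤ α • ((m + M) • (1 : H →L[ℂ] H) - A) + γ • 1 + ε • opAbs (A - c • 1) := step2
      _ ≤ (α • ((m + M) • (1 : H →L[ℂ] H) - A) + γ • 1 + ε • opAbs (A - c • 1)) +
          ((α • A + γ • 1 + ε • ∑ i, Φ i (opAbs (B i - c • 1))) - ∑ i, Φ i (cfc f (B i))) :=
          le_add_of_nonneg_right hE
      _ = (f m + f M) • (1 : H →L[ℂ] H) - ∑ i, Φ i (cfc f (B i)) -
          δ • ((1 : H →L[ℂ] H) - (M - m)⁻¹ •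
            (∑ i, Φ i (opAbs (B i - c • 1)) + opAbs (A - c • 1))) := by
          rw [hα_def, hγ_def, hε_def, hδ_def]
          match_scalars <;> (field_simp; try ring)
  · exact sub_le_self _ (smul_nonneg hδnn hBt)
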